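/- In the boundary-field setting: the angle function satisfies ∂_r θ(0) = ζ cos θ₁ − α sin θ₁ and ∂_s θ(0) = γ cos θ₁ − β sin θ₁. Moreover, if 0 is a critical point of β̂, i.e. ∂_r β̂(0) = ∂_s β̂(0) = 0, then C(θ₁) α + S(θ₁) ζ = 0 and C(θ₁) β + S(θ₁) γ = 0; in particular, if S(θ₁) ≠ 0 then ζ = T(θ₁) α and γ = T(θ₁) β with T(θ₁) = −C(θ₁)/S(θ₁). -/

import Mathlib

open Real Set

noncomputable section

/-- Partial derivative with respect to the first variable. -/
def pd1 (u : ℝ → ℝ → ℝ) : ℝ → ℝ → ℝ := fun r s => deriv (fun x => u x s) r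

/-- Partial derivative with respect to the second variable. -/
def pd2 (u : ℝ → ℝ → ℝ) : ℝ → ℝ → ℝ := fun r s => deriv (fun y => u r y) s

/-- The pointwise norm of the field `b = (b₁, b₂, b₃)`. -/
def nrmb (b1 b2 b3 : ℝ → ℝ → ℝ) : ℝ → ℝ → ℝ :=
  fun r s => Real.sqrt ((b1 r s)^2 + (b2 r s)^2 + (b3 r s)^2)

/-- The angle function `θ(r,s) ∈ (0, π/2)` defined by `sin θ(r,s) = b₃(r,s)/‖b(r,s)‖`. -/
def angleFun (b1 b2 b3 : ℝ → ℝ → ℝ) : ℝ → ℝ → ℝ :=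
  fun r s => Real.arcsin (b3 r s / nrmb b1 b2 b3 r s)

/-- The function `β̂(r,s) = σ(θ(r,s)) ‖b(r,s)‖`. -/
def betaHat (σ : ℝ → ℝ) (b1 b2 b3 : ℝ → ℝ → ℝ) : ℝ → ℝ → ℝ :=
  fun r s => σ (angleFun b1 b2 b3 r s) * nrmb b1 b2 b3 r s

/-- The boundary-field setting: `θ₁ ∈ (0, π/2)`, `σ` is `C²` on `(0, π/2)`,
`b = (b₁,b₂,b₃)` is a smooth vector field on an open neighbourhood `U` of `0 ∈ ℝ²` with
`b(0) = (0, cos θ₁, sin θ₁)` and `b₃/‖b‖ ∈ (0,1)` on `U`. -/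
structure BoundaryFieldSetting (θ₁ : ℝ) (σ : ℝ → ℝ) (U : Set (ℝ × ℝ))
    (b1 b2 b3 : ℝ → ℝ → ℝ) : Prop where
  theta_mem : θ₁ ∈ Set.Ioo 0 (π/2)
  sigma_C2 : ContDiffOn ℝ 2 σ (Set.Ioo 0 (π/2))
  U_open : IsOpen U
  zero_mem : (0, 0) ∈ U
  b1_smooth : ∀ n : ℕ, ContDiffOn ℝ n (fun p : ℝ × ℝ => b1 p.1 p.2) U
  b2_smooth : ∀ n : ℕ, ContDiffOn ℝ n (fun p : ℝ × ℝ => b2 p.1 p.2) U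
  b3_smooth : ∀ n : ℕ, ContDiffOn ℝ n (fun p : ℝ × ℝ => b3 p.1 p.2) U
  b1_zero : b1 0 0 = 0
  b2_zero : b2 0 0 = Real.cos θ₁
  b3_zero : b3 0 0 = Real.sin θ₁
  ratio_mem : ∀ p ∈ U, b3 p.1 p.2 / nrmb b1 b2 b3 p.1 p.2 ∈ Set.Ioo (0:ℝ) 1


lemma key_deriv (θ₁ : ℝ) (σ : ℝ → ℝ) (hθl : 0 < θ₁) (hθu : θ₁ < π/2)
    (hσ : HasDerivAt σ (deriv σ θ₁) θ₁)
    (c1 c2 c3 : ℝ → ℝ) (d a z : ℝ)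
    (h1 : HasDerivAt c1 d 0) (h2 : HasDerivAt c2 a 0) (h3 : HasDerivAt c3 z 0)
    (v1 : c1 0 = 0) (v2 : c2 0 = Real.cos θ₁) (v3 : c3 0 = Real.sin θ₁) :
    HasDerivAt (fun r => Real.arcsin (c3 r / Real.sqrt ((c1 r)^2+(c2 r)^2+(c3 r)^2)))
      (z * Real.cos θ₁ - a * Real.sin θ₁) 0 ∧
    HasDerivAt (fun r => σ (Real.arcsin (c3 r / Real.sqrt ((c1 r)^2+(c2 r)^2+(c3 r)^2)))
        * Real.sqrt ((c1 r)^2+(c2 r)^2+(c3 r)^2))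
      ((Real.cos θ₁ * σ θ₁ - Real.sin θ₁ * deriv σ θ₁) * a
        + (Real.sin θ₁ * σ θ₁ + Real.cos θ₁ * deriv σ θ₁) * z) 0 := by
  have hπ := Real.pi_pos
  have hcos : 0 < Real.cos θ₁ := Real.cos_pos_of_mem_Ioo ⟨by linarith, hθu⟩
  have hsin : 0 < Real.sin θ₁ := Real.sin_pos_of_pos_of_lt_pi hθl (by linarith)
  have hpy := Real.sin_sq_add_cos_sq θ₁
  have hsin1 : Real.sin θ₁ < 1 := by nlinarith
  have hval : c1 0^2 + c2 0^2 + c3 0^2 = 1 := by rw [v1, v2, v3]; nlinarith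
  have hinner : HasDerivAt (fun r => c1 r^2 + c2 r^2 + c3 r^2)
      (2*c1 0*d + 2*c2 0*a + 2*c3 0*z) 0 := by
    have := ((h1.pow 2).add (h2.pow 2)).add (h3.pow 2)
    refine this.congr_deriv (Eq.symm ?_)
    push_cast
    ring
  have hN : HasDerivAt (fun r => Real.sqrt ((c1 r)^2+(c2 r)^2+(c3 r)^2))
      (a * Real.cos θ₁ + z * Real.sin θ₁) 0 := by
    have := hinner.sqrt (by rw [hval]; norm_num)
    refine this.congr_deriv (Eq.symm ?_)
    rw [hval, v1, v2, v3, Real.sqrt_one]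
    ring
  have hN0 : Real.sqrt ((c1 0)^2+(c2 0)^2+(c3 0)^2) = 1 := by rw [hval]; exact Real.sqrt_one
  have hq : HasDerivAt (fun r => c3 r / Real.sqrt ((c1 r)^2+(c2 r)^2+(c3 r)^2))
      (z - Real.sin θ₁ * (a * Real.cos θ₁ + z * Real.sin θ₁)) 0 := by
    have := h3.div hN (by rw [hN0]; norm_num)
    refine this.congr_deriv (Eq.symm ?_)
    rw [hN0, v3]
    ring
  have hq0 : c3 0 / Real.sqrt ((c1 0)^2+(c2 0)^2+(c3 0)^2) = Real.sin θ₁ := by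
    rw [hN0, v3, div_one]
  have hsq : Real.sqrt (1 - Real.sin θ₁^2) = Real.cos θ₁ := by
    rw [show 1 - Real.sin θ₁^2 = Real.cos θ₁^2 by nlinarith]
    exact Real.sqrt_sq hcos.le
  have harc : HasDerivAt Real.arcsin
      (1 / Real.sqrt (1 - (c3 0 / Real.sqrt ((c1 0)^2+(c2 0)^2+(c3 0)^2))^2))
      (c3 0 / Real.sqrt ((c1 0)^2+(c2 0)^2+(c3 0)^2)) :=
    Real.hasDerivAt_arcsin (by rw [hq0]; linarith) (by rw [hq0]; exact ne_of_lt hsin1)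
  have hθd : HasDerivAt (fun r => Real.arcsin (c3 r / Real.sqrt ((c1 r)^2+(c2 r)^2+(c3 r)^2)))
      (z * Real.cos θ₁ - a * Real.sin θ₁) 0 := by
    have hcomp := harc.comp 0 hq
    refine hcomp.congr_deriv (Eq.symm ?_)
    rw [hq0, hsq]
    field_simp
    linear_combination z * hpy
  refine ⟨hθd, ?_⟩
  have hθ0 : Real.arcsin (c3 0 / Real.sqrt ((c1 0)^2+(c2 0)^2+(c3 0)^2)) = θ₁ := by
    rw [hq0, Real.arcsin_sin (by linarith) (by linarith)]
  have hσ' : HasDerivAt σ (deriv σ θ₁)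
      (Real.arcsin (c3 0 / Real.sqrt ((c1 0)^2+(c2 0)^2+(c3 0)^2))) := by
    rw [hθ0]; exact hσ
  have hmul := (hσ'.comp 0 hθd).mul hN
  refine hmul.congr_deriv (Eq.symm ?_)
  simp only [Function.comp_apply]
  rw [hθ0, hN0]
  show (Real.cos θ₁ * σ θ₁ - Real.sin θ₁ * deriv σ θ₁) * a
        + (Real.sin θ₁ * σ θ₁ + Real.cos θ₁ * deriv σ θ₁) * z
    = deriv σ θ₁ * (z * Real.cos θ₁ - a * Real.sin θ₁) * 1
        + σ θ₁ * (a * Real.cos θ₁ + z * Real.sin θ₁)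
  ring

lemma comp_line1 {f : ℝ × ℝ → ℝ} (hf : DifferentiableAt ℝ f ((0:ℝ), (0:ℝ))) :
    DifferentiableAt ℝ (fun r : ℝ => f (r, 0)) 0 := by
  have hl : DifferentiableAt ℝ (fun r : ℝ => ((r, (0:ℝ)) : ℝ × ℝ)) 0 :=
    differentiableAt_fun_id.prodMk (differentiableAt_const (0:ℝ))
  exact hf.comp (f := fun r : ℝ => ((r, (0:ℝ)) : ℝ × ℝ)) 0 hl

lemma comp_line2 {f : ℝ × ℝ → ℝ} (hf : DifferentiableAt ℝ f ((0:ℝ), (0:ℝ))) :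
    DifferentiableAt ℝ (fun s : ℝ => f (0, s)) 0 := by
  have hl : DifferentiableAt ℝ (fun s : ℝ => (((0:ℝ), s) : ℝ × ℝ)) 0 :=
    (differentiableAt_const (0:ℝ)).prodMk differentiableAt_fun_id
  exact hf.comp (f := fun s : ℝ => (((0:ℝ), s) : ℝ × ℝ)) 0 hl

/-- Critical point relations: the first derivatives of the angle function at `0`, and,
if `0` is a critical point of `β̂`, the relations `C(θ₁)α + S(θ₁)ζ = 0`,
`C(θ₁)β + S(θ₁)γ = 0`, and (if `S(θ₁) ≠ 0`) `ζ = T(θ₁)α`, `γ = T(θ₁)β`. -/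
theorem critical_point_relations (θ₁ : ℝ) (σ : ℝ → ℝ) (U : Set (ℝ × ℝ))
    (b1 b2 b3 : ℝ → ℝ → ℝ) (H : BoundaryFieldSetting θ₁ σ U b1 b2 b3)
    (al be ze ga : ℝ)
    (hal : al = pd1 b2 0 0) (hbe : be = pd2 b2 0 0)
    (hze : ze = pd1 b3 0 0) (hga : ga = pd2 b3 0 0)
    (Cθ Sθ : ℝ)
    (hC : Cθ = Real.cos θ₁ * σ θ₁ - Real.sin θ₁ * deriv σ θ₁)
    (hS : Sθ = Real.sin θ₁ * σ θ₁ + Real.cos θ₁ * deriv σ θ₁) :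
    pd1 (angleFun b1 b2 b3) 0 0 = ze * Real.cos θ₁ - al * Real.sin θ₁ ∧
    pd2 (angleFun b1 b2 b3) 0 0 = ga * Real.cos θ₁ - be * Real.sin θ₁ ∧
    (pd1 (betaHat σ b1 b2 b3) 0 0 = 0 → pd2 (betaHat σ b1 b2 b3) 0 0 = 0 →
      (Cθ * al + Sθ * ze = 0 ∧ Cθ * be + Sθ * ga = 0 ∧
        (Sθ ≠ 0 → ze = (- Cθ / Sθ) * al ∧ ga = (- Cθ / Sθ) * be))) := by
  obtain ⟨hθl, hθu⟩ := H.theta_mem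
  have hmem : U ∈ nhds ((0:ℝ), (0:ℝ)) := H.U_open.mem_nhds H.zero_mem
  have hσ : HasDerivAt σ (deriv σ θ₁) θ₁ :=
    (((H.sigma_C2.contDiffAt (isOpen_Ioo.mem_nhds ⟨hθl, hθu⟩)).differentiableAt
      (by norm_num))).hasDerivAt
  have db1 : DifferentiableAt ℝ (fun p : ℝ × ℝ => b1 p.1 p.2) (0, 0) :=
    ((H.b1_smooth 1).contDiffAt hmem).differentiableAt (by norm_num)
  have db2 : DifferentiableAt ℝ (fun p : ℝ × ℝ => b2 p.1 p.2) (0, 0) :=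
    ((H.b2_smooth 1).contDiffAt hmem).differentiableAt (by norm_num)
  have db3 : DifferentiableAt ℝ (fun p : ℝ × ℝ => b3 p.1 p.2) (0, 0) :=
    ((H.b3_smooth 1).contDiffAt hmem).differentiableAt (by norm_num)
  -- r-direction
  have key1 := key_deriv θ₁ σ hθl hθu hσ (fun r => b1 r 0) (fun r => b2 r 0) (fun r => b3 r 0)
    (deriv (fun r => b1 r 0) 0) (pd1 b2 0 0) (pd1 b3 0 0)
    (comp_line1 db1).hasDerivAt (comp_line1 db2).hasDerivAt (comp_line1 db3).hasDerivAt
    H.b1_zero H.b2_zero H.b3_zero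
  -- s-direction
  have key2 := key_deriv θ₁ σ hθl hθu hσ (fun s => b1 0 s) (fun s => b2 0 s) (fun s => b3 0 s)
    (deriv (fun s => b1 0 s) 0) (pd2 b2 0 0) (pd2 b3 0 0)
    (comp_line2 db1).hasDerivAt (comp_line2 db2).hasDerivAt (comp_line2 db3).hasDerivAt
    H.b1_zero H.b2_zero H.b3_zero
  have A1 : pd1 (angleFun b1 b2 b3) 0 0
      = pd1 b3 0 0 * Real.cos θ₁ - pd1 b2 0 0 * Real.sin θ₁ := by
    simp only [pd1, angleFun, nrmb]
    exact key1.1.deriv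
  have A2 : pd2 (angleFun b1 b2 b3) 0 0
      = pd2 b3 0 0 * Real.cos θ₁ - pd2 b2 0 0 * Real.sin θ₁ := by
    simp only [pd2, angleFun, nrmb]
    exact key2.1.deriv
  have B1 : pd1 (betaHat σ b1 b2 b3) 0 0
      = (Real.cos θ₁ * σ θ₁ - Real.sin θ₁ * deriv σ θ₁) * pd1 b2 0 0
        + (Real.sin θ₁ * σ θ₁ + Real.cos θ₁ * deriv σ θ₁) * pd1 b3 0 0 := by
    simp only [pd1, betaHat, angleFun, nrmb]
    exact key1.2.deriv
  have B2 : pd2 (betaHat σ b1 b2 b3) 0 0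
      = (Real.cos θ₁ * σ θ₁ - Real.sin θ₁ * deriv σ θ₁) * pd2 b2 0 0
        + (Real.sin θ₁ * σ θ₁ + Real.cos θ₁ * deriv σ θ₁) * pd2 b3 0 0 := by
    simp only [pd2, betaHat, angleFun, nrmb]
    exact key2.2.deriv
  subst hal hbe hze hga hC hS
  refine ⟨A1, A2, fun h1 h2 => ?_⟩
  rw [B1] at h1
  rw [B2] at h2
  refine ⟨by linarith, by linarith, fun hSne => ⟨?_, ?_⟩⟩
  · rw [div_mul_eq_mul_div, eq_div_iff hSne]
    linarith
  · rw [div_mul_eq_mul_div, eq_div_iff hSne]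
    linarith
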